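/- Let γ_s < 0, β = -γ_s/2 > 0. For any continuous φ : (-∞,0] → ℝ with ‖φ‖_β := sup_{t≤0} e^{-βt}|φ(t)| < ∞, the function t ↦ ∫_0^t e^{-γ_s(t-s)} φ(s) ds (for t ≤ 0) satisfies sup_{t≤0} e^{-βt}|∫_t^0 e^{-γ_s(t-s)} φ(s) ds| ≤ (1/(-β - γ_s)) ‖φ‖_β. -/

import Mathlib

open Real

lemma exp_integral_aux (k : ℝ) (hk : k ≠ 0) (a b : ℝ) :
    ∫ s in a..b, Real.exp (k * s) = (Real.exp (k * b) - Real.exp (k * a)) / k := by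
  have hD : ∀ x : ℝ, HasDerivAt (fun s => Real.exp (k * s) / k) (Real.exp (k * x)) x := by
    intro x
    have h1 : HasDerivAt (fun s : ℝ => k * s) k x := by
      simpa using (hasDerivAt_id x).const_mul k
    have h2 := (Real.hasDerivAt_exp (k * x)).comp x h1
    have h3 := h2.div_const k
    simpa [mul_div_assoc, mul_div_cancel_right₀, hk] using h3
  have hint : IntervalIntegrable (fun s => Real.exp (k * s)) MeasureTheory.volume a b :=
    (Real.continuous_exp.comp (continuous_const.mul continuous_id)).intervalIntegrable a b
  have := intervalIntegral.integral_eq_sub_of_hasDerivAt (fun x _ => hD x) hint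
  rw [this]
  ring

/-- Convolution estimate in the weighted space `C_β^{s,-}`: for continuous `φ` with
`e^{-βt}|φ(t)| ≤ M` on `t ≤ 0`,
`sup_{t≤0} e^{-βt}|∫_t^0 e^{-γ_s(t-s)} φ(s) ds| ≤ M/(-β - γ_s)`, where `β = -γ_s/2`. -/
theorem stmt8 (γs : ℝ) (hγs : γs < 0) (β : ℝ) (hβ : β = -γs/2)
    (φ : ℝ → ℝ) (hφ : Continuous φ)
    (M : ℝ) (hM : ∀ t ≤ (0:ℝ), Real.exp (-β*t) * |φ t| ≤ M) :
    ∀ t ≤ (0:ℝ),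
      Real.exp (-β*t) * |∫ s in t..(0:ℝ), Real.exp (-γs * (t - s)) * φ s|
      ≤ (1 / (-β - γs)) * M := by
  intro t ht
  set k : ℝ := γs + β with hkdef
  have hk : k < 0 := by rw [hkdef, hβ]; linarith
  have hkne : k ≠ 0 := ne_of_lt hk
  have hM0 : 0 ≤ M := le_trans (by positivity) (hM 0 le_rfl)
  -- pointwise bound
  have hφb : ∀ s, s ≤ 0 → |φ s| ≤ M * Real.exp (β * s) := by
    intro s hs
    have h1 := hM s hs
    have h2 : Real.exp (-β * s) * Real.exp (β * s) = 1 := by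
      rw [← Real.exp_add]; ring_nf; exact Real.exp_zero
    nlinarith [Real.exp_pos (β * s), Real.exp_pos (-β * s), abs_nonneg (φ s)]
  have hcont : Continuous fun s => Real.exp (-γs * (t - s)) * φ s := by
    exact (Real.continuous_exp.comp (by continuity)).mul hφ
  have hint1 : IntervalIntegrable (fun s => Real.exp (-γs * (t - s)) * φ s)
      MeasureTheory.volume t 0 := hcont.intervalIntegrable t 0
  have hcont2 : Continuous fun s => M * Real.exp (-γs * t) * Real.exp (k * s) := by
    exact continuous_const.mul (Real.continuous_exp.comp (continuous_const.mul continuous_id))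
  have hint2 : IntervalIntegrable (fun s => M * Real.exp (-γs * t) * Real.exp (k * s))
      MeasureTheory.volume t 0 := hcont2.intervalIntegrable t 0
  have habs : |∫ s in t..(0:ℝ), Real.exp (-γs * (t - s)) * φ s|
      ≤ ∫ s in t..(0:ℝ), M * Real.exp (-γs * t) * Real.exp (k * s) := by
    refine intervalIntegral.abs_integral_le_integral_abs ht |>.trans ?_
    refine intervalIntegral.integral_mono_on ht (hcont.abs.intervalIntegrable t 0) hint2 ?_
    intro s hs
    rw [abs_mul, abs_of_pos (Real.exp_pos _)]
    have hb := hφb s hs.2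
    have harg : -γs * (t - s) + β * s = -γs * t + k * s := by rw [hkdef]; ring
    have e1 : Real.exp (-γs * (t - s)) * (M * Real.exp (β * s))
        = M * Real.exp (-γs * t) * Real.exp (k * s) := by
      rw [show Real.exp (-γs * (t - s)) * (M * Real.exp (β * s))
          = M * (Real.exp (-γs * (t - s)) * Real.exp (β * s)) from by ring,
        ← Real.exp_add, harg, Real.exp_add, ← mul_assoc]
    calc Real.exp (-γs * (t - s)) * |φ s|
        ≤ Real.exp (-γs * (t - s)) * (M * Real.exp (β * s)) :=
          mul_le_mul_of_nonneg_left hb (Real.exp_pos _).le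
      _ = M * Real.exp (-γs * t) * Real.exp (k * s) := e1
  have hval : ∫ s in t..(0:ℝ), M * Real.exp (-γs * t) * Real.exp (k * s)
      = M * Real.exp (-γs * t) * ((1 - Real.exp (k * t)) / k) := by
    rw [intervalIntegral.integral_const_mul, exp_integral_aux k hkne]
    simp
  have heq : Real.exp (-β * t) * Real.exp (-γs * t) = Real.exp ((-k) * t) := by
    rw [← Real.exp_add, hkdef]; ring_nf
  have hXle : -(Real.exp ((-k) * t) * (1 - Real.exp (k * t))) ≤ 1 := by
    have h1 : Real.exp ((-k) * t) * Real.exp (k * t) = 1 := by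
      rw [← Real.exp_add]; ring_nf; exact Real.exp_zero
    nlinarith [Real.exp_pos ((-k) * t)]
  have hgoal : Real.exp (-β * t) * |∫ s in t..(0:ℝ), Real.exp (-γs * (t - s)) * φ s|
      ≤ Real.exp (-β * t) * (M * Real.exp (-γs * t) * ((1 - Real.exp (k * t)) / k)) := by
    rw [← hval]
    exact mul_le_mul_of_nonneg_left habs (Real.exp_pos _).le
  refine hgoal.trans ?_
  have hmk : 0 < -k := by linarith
  have hrw : Real.exp (-β * t) * (M * Real.exp (-γs * t) * ((1 - Real.exp (k * t)) / k))
      = M * (-(Real.exp ((-k) * t) * (1 - Real.exp (k * t)))) / (-k) := by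
    rw [← heq]
    field_simp
  rw [hrw]
  have hfin : M * (-(Real.exp ((-k) * t) * (1 - Real.exp (k * t)))) / (-k) ≤ M * 1 / (-k) :=
    (div_le_div_iff_of_pos_right hmk).mpr (mul_le_mul_of_nonneg_left hXle hM0)
  refine hfin.trans_eq ?_
  rw [hkdef]
  ring
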